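/- Let r ≥ 1 and s ≥ 0 be integers, let z_1, …, z_r ∈ ℝ, and let Σ be the 2r(s+1) × 2r(s+1) real symmetric matrix indexed by triples (T, i, a) with T ∈ {W, Z}, i ∈ {1,…,r}, a ∈ {0,…,s}, with entries Σ_{(W,i,a),(W,i',b)} = Σ_{(Z,i,a),(Z,i',b)} = ((−1)^b/2) ∫_0^1 θ^{a+b} Cos^{(a+b)}((z_i − z_{i'})θ) dθ, Σ_{(W,i,a),(Z,i',b)} = ((−1)^b/2) ∫_0^1 θ^{a+b} Sin^{(a+b)}((z_i − z_{i'})θ) dθ, and Σ_{(Z,i,a),(W,i',b)} = ((−1)^a/2) ∫_0^1 θ^{a+b} Sin^{(a+b)}((z_{i'} − z_i)θ) dθ. Then for every real vector v = (x, y) with components x_{i,a} (in the W-coordinates) and y_{i,a} (in the Z-coordinates), vᵀ Σ v = (1/2) ∫_0^1 |F_v(θ)|² dθ, where F_v(θ) = ∑_{i=1}^r ∑_{a=0}^s (x_{i,a} + i·y_{i,a}) (iθ)^a e^{i z_i θ} (a complex-valued function of θ, with i the imaginary unit). -/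

import Mathlib

open MeasureTheory Real

/-- Covariance entry of the limiting stationary Gaussian process `(W,Z)`:
`false` stands for `W` and `true` for `Z`. -/
noncomputable def limCov (zi zj : ℝ) (T T' : Bool) (a b : ℕ) : ℝ :=
  match T, T' with
  | false, false =>
      ((-1 : ℝ) ^ b / 2) * ∫ θ in (0:ℝ)..1, θ ^ (a + b) * iteratedDeriv (a + b) Real.cos ((zi - zj) * θ)
  | true, true =>
      ((-1 : ℝ) ^ b / 2) * ∫ θ in (0:ℝ)..1, θ ^ (a + b) * iteratedDeriv (a + b) Real.cos ((zi - zj) * θ)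
  | false, true =>
      ((-1 : ℝ) ^ b / 2) * ∫ θ in (0:ℝ)..1, θ ^ (a + b) * iteratedDeriv (a + b) Real.sin ((zi - zj) * θ)
  | true, false =>
      ((-1 : ℝ) ^ a / 2) * ∫ θ in (0:ℝ)..1, θ ^ (a + b) * iteratedDeriv (a + b) Real.sin ((zj - zi) * θ)

lemma itDeriv (n : ℕ) :
    (∀ x : ℝ, iteratedDeriv n Real.cos x = (Complex.I ^ n * Complex.exp (x * Complex.I)).re) ∧
    (∀ x : ℝ, iteratedDeriv n Real.sin x = (Complex.I ^ n * Complex.exp (x * Complex.I)).im) := by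
  induction n with
  | zero => constructor <;> intro x <;>
      simp [Complex.exp_ofReal_mul_I_re, Complex.exp_ofReal_mul_I_im]
  | succ n ih =>
      constructor
      · intro x
        rw [iteratedDeriv_succ', Real.deriv_cos']
        show iteratedDeriv n (-Real.sin) x = _
        rw [iteratedDeriv_neg n Real.sin x, ih.2 x, pow_succ]
        simp [Complex.mul_re]; ring
      · intro x
        rw [iteratedDeriv_succ', Real.deriv_sin, ih.1 x, pow_succ]
        simp [Complex.mul_im]; ring

noncomputable def trm (x : ℝ) (T : Bool) (zi : ℝ) (a : ℕ) (θ : ℝ) : ℂ :=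
  ((x : ℂ) * (if T then Complex.I else 1)) * (Complex.I * (θ : ℂ)) ^ a *
    Complex.exp (Complex.I * (zi : ℂ) * (θ : ℂ))

lemma exp_arg (zi θ : ℝ) :
    Complex.exp (Complex.I * (zi : ℂ) * (θ : ℂ)) = Complex.exp (((zi * θ : ℝ) : ℂ) * Complex.I) := by
  push_cast; ring_nf

lemma pt (x y zi zj θ : ℝ) (T T' : Bool) (a b : ℕ) (h : T = true → T' = true) :
    x * ((if T' = T then ((-1 : ℝ) ^ b / 2) * (θ ^ (a + b) * iteratedDeriv (a + b) Real.cos ((zi - zj) * θ))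
      else if T' then ((-1 : ℝ) ^ b / 2) * (θ ^ (a + b) * iteratedDeriv (a + b) Real.sin ((zi - zj) * θ))
      else ((-1 : ℝ) ^ a / 2) * (θ ^ (a + b) * iteratedDeriv (a + b) Real.sin ((zj - zi) * θ)))) * y
    = (1 / 2) * (trm x T zi a θ * (starRingEnd ℂ) (trm y T' zj b θ)).re := by
  have h2 : ((-1 : ℂ)) ^ b = (((-1 : ℝ) ^ b : ℝ) : ℂ) := by push_cast; ring
  have h3 : ((zj * θ : ℝ) : ℂ) * -Complex.I = ((-(zj * θ) : ℝ) : ℂ) * Complex.I := by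
    push_cast; ring
  have h1 : (zi - zj) * θ = zi * θ - zj * θ := by ring
  rcases T <;> rcases T'
  case true.false => exact absurd (h rfl) (by simp)
  all_goals
    simp only [if_true, if_false, Bool.false_eq_true, Bool.true_eq_false, if_neg Bool.false_ne_true,
      reduceCtorEq, reduceIte, (itDeriv (a + b)).1, (itDeriv (a + b)).2, trm, mul_one] <;>
    simp only [map_mul, map_pow, map_one, Complex.conj_I, Complex.conj_ofReal, ← Complex.exp_conj,
      exp_arg, pow_add, mul_pow, mul_one] <;>
    rw [h3, neg_pow Complex.I, h2] <;>
    rw [h1] <;>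
    simp only [← Complex.ofReal_pow, Complex.mul_re, Complex.mul_im, Complex.ofReal_re,
      Complex.ofReal_im, Complex.exp_ofReal_mul_I_re, Complex.exp_ofReal_mul_I_im,
      Complex.I_re, Complex.I_im, Complex.neg_re, Complex.neg_im,
      Real.cos_sub, Real.sin_sub, Real.cos_neg, Real.sin_neg] <;>
    ring

lemma reSymm (w t : ℂ) : (w * (starRingEnd ℂ) t).re = (t * (starRingEnd ℂ) w).re := by
  simp [Complex.mul_re]; ring

lemma pull (x y c : ℝ) (f : ℝ → ℝ) :
    x * (c * ∫ θ in (0:ℝ)..1, f θ) * y = ∫ θ in (0:ℝ)..1, x * (c * f θ) * y := by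
  have h : (fun θ => x * (c * f θ) * y) = fun θ => (x * c * y) * f θ := by funext θ; ring
  rw [h, intervalIntegral.integral_const_mul]; ring

lemma perPair (x y zi zj : ℝ) (T T' : Bool) (a b : ℕ) :
    x * limCov zi zj T T' a b * y
      = ∫ θ in (0:ℝ)..1, (1 / 2) * (trm x T zi a θ * (starRingEnd ℂ) (trm y T' zj b θ)).re := by
  rcases T <;> rcases T' <;> simp only [limCov]
  case false.false =>
    rw [pull]
    refine intervalIntegral.integral_congr fun θ _ => ?_
    have h := pt x y zi zj θ false false a b (by simp)
    simpa using h
  case false.true =>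
    rw [pull]
    refine intervalIntegral.integral_congr fun θ _ => ?_
    have h := pt x y zi zj θ false true a b (by simp)
    simpa using h
  case true.true =>
    rw [pull]
    refine intervalIntegral.integral_congr fun θ _ => ?_
    have h := pt x y zi zj θ true true a b (by simp)
    simpa using h
  case true.false =>
    rw [Nat.add_comm a b, pull]
    refine intervalIntegral.integral_congr fun θ _ => ?_
    have h := pt y x zj zi θ false true b a (by simp)
    simp only [Bool.true_eq_false, reduceCtorEq, reduceIte, if_true, if_false] at h
    rw [reSymm]
    linear_combination h

lemma contTrm (x zi : ℝ) (T : Bool) (a : ℕ) : Continuous fun θ : ℝ => trm x T zi a θ := by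
  unfold trm; fun_prop

lemma contIntegrand (x y zi zj : ℝ) (T T' : Bool) (a b : ℕ) :
    Continuous fun θ : ℝ => (1 / 2) * (trm x T zi a θ * (starRingEnd ℂ) (trm y T' zj b θ)).re := by
  apply Continuous.mul continuous_const
  exact Complex.continuous_re.comp ((contTrm x zi T a).mul
    (Complex.continuous_conj.comp (contTrm y zj T' b)))

/-- Integral form of the quadratic form of the limiting covariance matrix: for every
real vector `v` with `W`-components `x_{i,a} = v (false,i,a)` and `Z`-components
`y_{i,a} = v (true,i,a)`,
`vᵀ Σ v = (1/2) ∫₀¹ |F_v(θ)|² dθ` where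
`F_v(θ) = ∑_{i,a} (x_{i,a} + i y_{i,a}) (iθ)^a e^{i z_i θ}`. -/
theorem statement14 (r s : ℕ) (hr : 1 ≤ r) (z : Fin r → ℝ)
    (v : Bool × Fin r × Fin (s + 1) → ℝ) :
    ∑ p : Bool × Fin r × Fin (s + 1), ∑ q : Bool × Fin r × Fin (s + 1),
        v p * limCov (z p.2.1) (z q.2.1) p.1 q.1 (p.2.2 : ℕ) (q.2.2 : ℕ) * v q
      = (1 / 2) * ∫ θ in (0:ℝ)..1,
          ‖∑ i : Fin r, ∑ a : Fin (s + 1),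
            ((v (false, i, a) : ℂ) + (v (true, i, a) : ℂ) * Complex.I) *
              (Complex.I * (θ : ℂ)) ^ (a : ℕ) *
              Complex.exp (Complex.I * (z i : ℂ) * (θ : ℂ))‖ ^ 2 := by
  have step1 : ∀ p q : Bool × Fin r × Fin (s + 1),
      v p * limCov (z p.2.1) (z q.2.1) p.1 q.1 (p.2.2 : ℕ) (q.2.2 : ℕ) * v q
        = ∫ θ in (0:ℝ)..1, (1 / 2) *
            (trm (v p) p.1 (z p.2.1) (p.2.2 : ℕ) θ *
              (starRingEnd ℂ) (trm (v q) q.1 (z q.2.1) (q.2.2 : ℕ) θ)).re :=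
    fun p q => perPair _ _ _ _ _ _ _ _
  rw [Finset.sum_congr rfl fun p _ => Finset.sum_congr rfl fun q _ => step1 p q]
  have intg : ∀ p q : Bool × Fin r × Fin (s + 1), IntervalIntegrable
      (fun θ => (1 / 2) * (trm (v p) p.1 (z p.2.1) (p.2.2 : ℕ) θ *
        (starRingEnd ℂ) (trm (v q) q.1 (z q.2.1) (q.2.2 : ℕ) θ)).re)
      MeasureTheory.volume 0 1 :=
    fun p q => (contIntegrand _ _ _ _ _ _ _ _).intervalIntegrable 0 1
  have step2 : ∀ p : Bool × Fin r × Fin (s + 1),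
      (∑ q : Bool × Fin r × Fin (s + 1), ∫ θ in (0:ℝ)..1, (1 / 2) *
            (trm (v p) p.1 (z p.2.1) (p.2.2 : ℕ) θ *
              (starRingEnd ℂ) (trm (v q) q.1 (z q.2.1) (q.2.2 : ℕ) θ)).re)
        = ∫ θ in (0:ℝ)..1, ∑ q : Bool × Fin r × Fin (s + 1), (1 / 2) *
            (trm (v p) p.1 (z p.2.1) (p.2.2 : ℕ) θ *
              (starRingEnd ℂ) (trm (v q) q.1 (z q.2.1) (q.2.2 : ℕ) θ)).re :=
    fun p => (intervalIntegral.integral_finset_sum (fun q _ => intg p q)).symm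
  rw [Finset.sum_congr rfl fun p _ => step2 p]
  have step3 := intervalIntegral.integral_finset_sum (μ := MeasureTheory.volume) (a := (0:ℝ))
    (b := 1) (s := Finset.univ)
    (f := fun (p : Bool × Fin r × Fin (s + 1)) θ => ∑ q : Bool × Fin r × Fin (s + 1),
      (1 / 2) * (trm (v p) p.1 (z p.2.1) (p.2.2 : ℕ) θ *
        (starRingEnd ℂ) (trm (v q) q.1 (z q.2.1) (q.2.2 : ℕ) θ)).re)
    (fun p _ => Continuous.intervalIntegrable
      (continuous_finset_sum _ fun q _ => contIntegrand _ _ _ _ _ _ _ _) 0 1)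
  rw [← step3]
  rw [← intervalIntegral.integral_const_mul]
  refine intervalIntegral.integral_congr fun θ _ => ?_
  -- pointwise identity
  have hF : (∑ i : Fin r, ∑ a : Fin (s + 1),
        ((v (false, i, a) : ℂ) + (v (true, i, a) : ℂ) * Complex.I) *
          (Complex.I * (θ : ℂ)) ^ (a : ℕ) *
          Complex.exp (Complex.I * (z i : ℂ) * (θ : ℂ)))
      = ∑ p : Bool × Fin r × Fin (s + 1), trm (v p) p.1 (z p.2.1) (p.2.2 : ℕ) θ := by
    rw [Fintype.sum_prod_type, Fintype.sum_bool, Fintype.sum_prod_type, Fintype.sum_prod_type,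
      ← Finset.sum_add_distrib]
    refine Finset.sum_congr rfl fun i _ => ?_
    rw [← Finset.sum_add_distrib]
    refine Finset.sum_congr rfl fun a _ => ?_
    simp only [trm, if_true, reduceIte, Bool.false_eq_true, if_false]
    ring
  rw [hF]
  have habs : ∀ w : ℂ, (‖w‖ : ℝ) ^ 2 = (w * (starRingEnd ℂ) w).re := by
    intro w; rw [Complex.sq_norm, Complex.mul_conj, Complex.ofReal_re]
  rw [habs, map_sum, Finset.sum_mul_sum, Complex.re_sum, Finset.mul_sum]
  refine Finset.sum_congr rfl fun p _ => ?_
  rw [Complex.re_sum, Finset.mul_sum]
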